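/- Let G be a finite connected graph, u1 a source and u2 a sink. For a vertex v with v ∉ {u1, u2}, the sum over incoming labeled flows equals the sum over outgoing labeled flows: ∑_{x ~ v} [u1 u2, x v] = ∑_{y ~ v} [u1 u2, v y], where [a b, c d] is the ordered second cofactor transpedance and both sums range over neighbors of v. -/
import Mathlib

/-- The transpedance `[u1 u2, w1 w2]`: the signed ordered second cofactor of `M`,
i.e. the positionally signed cofactor of the `(u2,w2)`-entry of the positionally signed
`(u1,w1)`-minor, expressed by the standard permutation-sum identity for second cofactors. -/
def transp {n : ℕ} (M : Matrix (Fin n) (Fin n) ℤ) (u1 u2 w1 w2 : Fin n) : ℤ :=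
  ∑ σ ∈ Finset.univ.filter (fun σ : Equiv.Perm (Fin n) => σ u1 = w1 ∧ σ u2 = w2),
    ((Equiv.Perm.sign σ : ℤˣ) : ℤ) *
      ∏ i ∈ Finset.univ.filter (fun i : Fin n => i ≠ u1 ∧ i ≠ u2), M i (σ i)

lemma transp_symm {n : ℕ} (M : Matrix (Fin n) (Fin n) ℤ) (u1 u2 w1 w2 : Fin n) :
    transp M u1 u2 w1 w2 = transp M u2 u1 w2 w1 := by
  unfold transp
  apply Finset.sum_congr (by ext σ; simp [and_comm])
  intro σ _
  congr 1
  exact Finset.prod_congr (by ext i; simp [and_comm]) (fun _ _ => rfl)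

lemma key {n : ℕ} (M : Matrix (Fin n) (Fin n) ℤ) (u1 u2 j w2 : Fin n)
    (h12 : u1 ≠ u2) (hj1 : j ≠ u1) (hj2 : j ≠ u2) :
    ∑ w1, M j w1 * transp M u1 u2 w1 w2 = 0 := by
  set N : Matrix (Fin n) (Fin n) ℤ :=
    (M.updateRow u1 (M j)).updateRow u2 (Pi.single w2 1) with hN
  have hNj : N j = M j := by
    rw [hN, Matrix.updateRow_ne hj2, Matrix.updateRow_ne hj1]
  have hNu1 : N u1 = M j := by
    rw [hN, Matrix.updateRow_ne h12, Matrix.updateRow_self]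
  have hdet : (N.transpose).det = 0 := by
    rw [Matrix.det_transpose]
    exact Matrix.det_zero_of_row_eq hj1 (hNj.trans hNu1.symm)
  rw [Matrix.det_apply] at hdet
  have step : ∀ σ : Equiv.Perm (Fin n),
      Equiv.Perm.sign σ • ∏ i, N.transpose (σ i) i
        = if σ u2 = w2 then (M j (σ u1) *
          (((Equiv.Perm.sign σ : ℤˣ) : ℤ) *
            ∏ i ∈ Finset.univ.filter (fun i : Fin n => i ≠ u1 ∧ i ≠ u2), M i (σ i)))
          else 0 := by
    intro σ
    have hprod : ∏ i, N.transpose (σ i) i = ∏ i, N i (σ i) := by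
      simp [Matrix.transpose_apply]
    rw [hprod]
    have hsplit := Finset.prod_filter_mul_prod_filter_not Finset.univ
      (fun i : Fin n => i ≠ u1 ∧ i ≠ u2) (fun i => N i (σ i))
    have hnotset : Finset.univ.filter (fun i : Fin n => ¬(i ≠ u1 ∧ i ≠ u2)) = {u1, u2} := by
      ext i
      simp only [Finset.mem_filter, Finset.mem_univ, true_and, not_and_or, not_not,
        Finset.mem_insert, Finset.mem_singleton]
    have hrest : ∏ i ∈ Finset.univ.filter (fun i : Fin n => i ≠ u1 ∧ i ≠ u2), N i (σ i)
        = ∏ i ∈ Finset.univ.filter (fun i : Fin n => i ≠ u1 ∧ i ≠ u2), M i (σ i) := by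
      apply Finset.prod_congr rfl
      intro i hi
      simp only [Finset.mem_filter] at hi
      rw [hN, Matrix.updateRow_ne hi.2.2, Matrix.updateRow_ne hi.2.1]
    rw [hnotset, Finset.prod_pair h12, hNu1] at hsplit
    have hu2 : N u2 (σ u2) = if σ u2 = w2 then (1:ℤ) else 0 := by
      rw [hN, Matrix.updateRow_self, Pi.single_apply]
    rw [hu2, hrest] at hsplit
    rw [← hsplit]
    split_ifs with h
    · simp only [mul_one, Units.smul_def, zsmul_eq_mul]; push_cast; ring
    · simp
  simp only [step] at hdet
  have e1 : ∀ w1 : Fin n, M j w1 * transp M u1 u2 w1 w2 =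
      ∑ σ ∈ (Finset.univ.filter (fun σ : Equiv.Perm (Fin n) => σ u2 = w2)).filter
          (fun σ => σ u1 = w1),
        M j (σ u1) * (((Equiv.Perm.sign σ : ℤˣ) : ℤ) *
          ∏ i ∈ Finset.univ.filter (fun i : Fin n => i ≠ u1 ∧ i ≠ u2), M i (σ i)) := by
    intro w1
    unfold transp
    rw [Finset.mul_sum]
    rw [show (Finset.univ.filter (fun σ : Equiv.Perm (Fin n) => σ u2 = w2)).filter
          (fun σ => σ u1 = w1)
        = Finset.univ.filter (fun σ : Equiv.Perm (Fin n) => σ u1 = w1 ∧ σ u2 = w2) from by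
      ext σ; simp [and_comm]]
    apply Finset.sum_congr rfl
    intro σ hσ
    simp only [Finset.mem_filter] at hσ
    rw [hσ.2.1]
  calc ∑ w1, M j w1 * transp M u1 u2 w1 w2
      = ∑ w1 : Fin n, ∑ σ ∈ (Finset.univ.filter
            (fun σ : Equiv.Perm (Fin n) => σ u2 = w2)).filter (fun σ => σ u1 = w1),
          M j (σ u1) * (((Equiv.Perm.sign σ : ℤˣ) : ℤ) *
            ∏ i ∈ Finset.univ.filter (fun i : Fin n => i ≠ u1 ∧ i ≠ u2), M i (σ i)) :=
        Finset.sum_congr rfl (fun w1 _ => e1 w1)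
    _ = ∑ σ ∈ Finset.univ.filter (fun σ : Equiv.Perm (Fin n) => σ u2 = w2),
          M j (σ u1) * (((Equiv.Perm.sign σ : ℤˣ) : ℤ) *
            ∏ i ∈ Finset.univ.filter (fun i : Fin n => i ≠ u1 ∧ i ≠ u2), M i (σ i)) :=
        Finset.sum_fiberwise _ _ _
    _ = 0 := by rw [Finset.sum_filter]; exact hdet

lemma sum_nbr {n : ℕ} (G : SimpleGraph (Fin n)) [DecidableRel G.Adj] (v : Fin n)
    (T : Fin n → ℤ) (h : ∑ w, G.lapMatrix ℤ v w * T w = 0) :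
    ∑ x ∈ G.neighborFinset v, T x = (G.degree v : ℤ) * T v := by
  have hL : ∀ w, G.lapMatrix ℤ v w
      = (if v = w then (G.degree v : ℤ) else 0) - (if G.Adj v w then 1 else 0) := by
    intro w
    simp [SimpleGraph.lapMatrix, SimpleGraph.degMatrix, Matrix.diagonal]
  simp only [hL, sub_mul] at h
  rw [Finset.sum_sub_distrib] at h
  have h1 : ∑ w : Fin n, (if v = w then (G.degree v : ℤ) else 0) * T w
      = (G.degree v : ℤ) * T v := by
    rw [Finset.sum_eq_single v]
    · simp
    · intro b _ hb; rw [if_neg (Ne.symm hb), zero_mul]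
    · simp
  have h2 : ∑ w : Fin n, (if G.Adj v w then (1:ℤ) else 0) * T w
      = ∑ x ∈ G.neighborFinset v, T x := by
    rw [SimpleGraph.neighborFinset_eq_filter, Finset.sum_filter]
    apply Finset.sum_congr rfl
    intro w _
    split_ifs <;> simp
  rw [h1, h2] at h
  linarith

/-- Kirchhoff's vertex law at interior vertices: for a vertex `v` distinct from the source `u1`
and the sink `u2`, the sum of the incoming transpedances over the neighbors of `v` equals the
sum of the outgoing transpedances. -/
theorem transpedance_flow_conservation {n : ℕ} (G : SimpleGraph (Fin n))
    [DecidableRel G.Adj] (hG : G.Connected) (u1 u2 v : Fin n)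
    (hv1 : v ≠ u1) (hv2 : v ≠ u2) :
    ∑ x ∈ G.neighborFinset v, transp (G.lapMatrix ℤ) u1 u2 x v =
      ∑ y ∈ G.neighborFinset v, transp (G.lapMatrix ℤ) u1 u2 v y := by
  by_cases h12 : u1 = u2
  · subst h12
    have hz : ∀ x ∈ G.neighborFinset v, transp (G.lapMatrix ℤ) u1 u1 x v = 0 ∧
        transp (G.lapMatrix ℤ) u1 u1 v x = 0 := by
      intro x hx
      have hadj : G.Adj v x := by rwa [SimpleGraph.mem_neighborFinset] at hx
      have hxv : x ≠ v := hadj.ne'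
      constructor <;>
      · unfold transp
        rw [Finset.filter_false_of_mem, Finset.sum_empty]
        intro σ _ hc
        exact hxv (by rw [← hc.1, hc.2])
    rw [Finset.sum_congr rfl (fun x hx => (hz x hx).1),
      Finset.sum_congr rfl (fun x hx => (hz x hx).2)]
  · have hA : ∑ x ∈ G.neighborFinset v, transp (G.lapMatrix ℤ) u1 u2 x v
        = (G.degree v : ℤ) * transp (G.lapMatrix ℤ) u1 u2 v v :=
      sum_nbr G v _ (key (G.lapMatrix ℤ) u1 u2 v v h12 hv1 hv2)
    have hkey2 : ∑ w2, (G.lapMatrix ℤ) v w2 * transp (G.lapMatrix ℤ) u1 u2 v w2 = 0 := by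
      have h0 := key (G.lapMatrix ℤ) u2 u1 v v (Ne.symm h12) hv2 hv1
      calc ∑ w2, (G.lapMatrix ℤ) v w2 * transp (G.lapMatrix ℤ) u1 u2 v w2
          = ∑ w2, (G.lapMatrix ℤ) v w2 * transp (G.lapMatrix ℤ) u2 u1 w2 v :=
            Finset.sum_congr rfl (fun w _ => by rw [transp_symm])
        _ = 0 := h0
    have hB : ∑ y ∈ G.neighborFinset v, transp (G.lapMatrix ℤ) u1 u2 v y
        = (G.degree v : ℤ) * transp (G.lapMatrix ℤ) u1 u2 v v :=
      sum_nbr G v _ hkey2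
    rw [hA, hB]
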